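/- arXiv:2007.09862 — 4 statements merged into one kernel-verified Lean document; each statement's English description precedes it below -/
import Mathlib

section
/- If 2√2/3 < a < √2, then the open disc {w ∈ ℂ : |w - a| < √2 - a} is contained in the region {w ∈ ℂ : |w² - 1| < 1} bounded by the lemniscate of Bernoulli. -/
theorem stmt_6 (a : ℝ) (ha1 : 2 * Real.sqrt 2 / 3 < a) (ha2 : a < Real.sqrt 2) :
    {w : ℂ | ‖w - (a:ℂ)‖ < Real.sqrt 2 - a} ⊆
      {w : ℂ | ‖w^2 - 1‖ < 1} := by
  intro w hw
  simp only [Set.mem_setOf_eq] at hw ⊢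
  set s := Real.sqrt 2 with hsdef
  have hs : s ^ 2 = 2 := Real.sq_sqrt (by norm_num)
  have hs0 : (0:ℝ) < s := Real.sqrt_pos.mpr (by norm_num)
  have ha0 : 0 < a := lt_trans (by positivity) ha1
  set x := w.re with hxdef
  set y := w.im with hydef
  have hr : 0 < s - a := sub_pos.mpr ha2
  -- square the disc hypothesis
  have h1 : (x - a) ^ 2 + y ^ 2 < (s - a) ^ 2 := by
    have := pow_lt_pow_left₀ hw (norm_nonneg _) (n := 2) (by norm_num)
    rw [Complex.sq_norm, Complex.normSq_apply] at this
    simpa [Complex.sub_re, Complex.sub_im, pow_two] using this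
  -- bounds on x
  have hx1 : x < s := by nlinarith [sq_nonneg y, sq_nonneg (x - a)]
  have hx2 : 2 * a - s < x := by nlinarith [sq_nonneg y, sq_nonneg (x - a)]
  -- the linear factor is nonnegative on the interval
  have hP : 0 ≤ (a ^ 2 - 1) * x + 3 * a - s * (1 + a ^ 2) := by
    have h3 : 0 < 3 * a - 2 * s := by nlinarith
    have h4 : 0 ≤ (x - (2 * a - s)) * (3 * a - 2 * s) :=
      mul_nonneg (by linarith) (by linarith)
    have h5 : 0 ≤ (s - x) * (a * (s * a - 1) ^ 2) :=
      mul_nonneg (by linarith) (mul_nonneg ha0.le (sq_nonneg _))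
    nlinarith [mul_pos hr hr]
  -- main estimates
  have hT : x ^ 2 + y ^ 2 < 2 - 2 * s * a + 2 * a * x := by nlinarith
  have hT0 : 0 < 2 - 2 * s * a + 2 * a * x := lt_of_le_of_lt (by positivity) hT
  have hT2 : (x ^ 2 + y ^ 2) ^ 2 < (2 - 2 * s * a + 2 * a * x) ^ 2 := by
    have h0 : (0:ℝ) ≤ x ^ 2 + y ^ 2 := by positivity
    nlinarith
  have hfin : (2 - 2 * s * a + 2 * a * x) ^ 2 < 2 * (x ^ 2 - y ^ 2) := by
    have h6 : 0 ≤ (s - x) * ((a ^ 2 - 1) * x + 3 * a - s * (1 + a ^ 2)) :=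
      mul_nonneg (by linarith) hP
    nlinarith
  have hkey : (x ^ 2 + y ^ 2) ^ 2 < 2 * (x ^ 2 - y ^ 2) := lt_trans hT2 hfin
  -- convert the goal
  have hgoal2 : (‖w ^ 2 - 1‖) ^ 2 = (x ^ 2 - y ^ 2 - 1) ^ 2 + (2 * x * y) ^ 2 := by
    rw [Complex.sq_norm, Complex.normSq_apply]
    simp only [Complex.sub_re, Complex.sub_im, Complex.one_re, Complex.one_im, pow_two,
      Complex.mul_re, Complex.mul_im, ← hxdef, ← hydef]
    ring
  have : (‖w ^ 2 - 1‖) ^ 2 < 1 ^ 2 := by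
    rw [hgoal2]; nlinarith
  exact lt_of_pow_lt_pow_left₀ 2 (by norm_num) this
end

section
/- If 1/3 < a ≤ 1, then the open disc {w ∈ ℂ : |w - a| < a - 1/3} is contained in the nephroid region Ω_Ne = {u + iv : ((u - 1)² + v² - 4/9)³ - 4v²/3 < 0}. -/
theorem stmt_8 (a : ℝ) (ha1 : 1/3 < a) (ha2 : a ≤ 1) :
    {w : ℂ | ‖w - (a:ℂ)‖ < a - 1/3} ⊆
      {w : ℂ | ((w.re - 1)^2 + w.im^2 - 4/9)^3 - (4/3) * w.im^2 < 0} := by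
  intro w hw
  simp only [Set.mem_setOf_eq] at hw ⊢
  have h1 : ‖w - 1‖ < 2/3 := by
    have htri : ‖w - 1‖ ≤ ‖w - (a:ℂ)‖ + ‖(a:ℂ) - 1‖ := by
      calc ‖w - 1‖ = ‖(w - (a:ℂ)) + ((a:ℂ) - 1)‖ := by ring_nf
        _ ≤ _ := norm_add_le _ _
    have ha : ‖(a:ℂ) - 1‖ = 1 - a := by
      rw [show ((a:ℂ) - 1) = ((a - 1 : ℝ) : ℂ) by push_cast; ring, Complex.norm_real, Real.norm_eq_abs,
        abs_of_nonpos (by linarith)]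
      ring
    linarith [htri, ha ▸ htri]
  have h2 : (w.re - 1)^2 + w.im^2 < 4/9 := by
    have := Complex.sq_norm (w - 1)
    have hsq : ‖w - 1‖ ^ 2 < (2/3)^2 := by
      have := norm_nonneg (w - 1)
      nlinarith
    rw [Complex.sq_norm, Complex.normSq_apply] at hsq
    simp only [Complex.sub_re, Complex.sub_im, Complex.one_re, Complex.one_im] at hsq
    nlinarith
  have hX : (w.re - 1)^2 + w.im^2 - 4/9 < 0 := by linarith
  have h3 : ((w.re - 1)^2 + w.im^2 - 4/9)^3 < 0 := Odd.pow_neg ⟨1, by norm_num⟩ hX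
  nlinarith [sq_nonneg w.im]
end

section
/- If a is real with |a - 1| ≤ √2 - 1, then the open disc {w ∈ ℂ : |w - a| < 1 - |√2 - a|} is contained in the lune region {w ∈ ℂ : |w² - 1| < 2|w|}. -/
theorem stmt_9 (a : ℝ) (ha : |a - 1| ≤ Real.sqrt 2 - 1) :
    {w : ℂ | ‖w - (a:ℂ)‖ < 1 - |Real.sqrt 2 - a|} ⊆
      {w : ℂ | ‖w^2 - 1‖ < 2 * ‖w‖} := by
  intro w hw
  simp only [Set.mem_setOf_eq] at hw ⊢
  have h2 : Real.sqrt 2 ^ 2 = 2 := Real.sq_sqrt (by norm_num)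
  have hs2 : (1:ℝ) ≤ Real.sqrt 2 := by
    nlinarith [Real.sqrt_nonneg 2]
  have hub : Real.sqrt 2 ≤ 2 := by nlinarith [Real.sqrt_nonneg 2]
  have ha' := abs_le.mp ha
  have habs : |Real.sqrt 2 - a| = Real.sqrt 2 - a := abs_of_nonneg (by linarith [ha'.2])
  rw [habs] at hw
  -- |w - 1| < √2
  have hwa1 : ‖(a:ℂ) - 1‖ = |a - 1| := by
    rw [show ((a:ℂ) - 1) = ((a - 1 : ℝ) : ℂ) by push_cast; ring, Complex.norm_real, Real.norm_eq_abs]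
  have h1 : ‖w - 1‖ < Real.sqrt 2 := by
    have htri := norm_sub_le_norm_sub_add_norm_sub w (a:ℂ) 1
    rw [hwa1] at htri
    rcases abs_cases (a - 1) with ⟨he, _⟩ | ⟨he, _⟩ <;> linarith
  -- |w + 1| > √2
  have hplus : Real.sqrt 2 < ‖w + 1‖ := by
    have htri := norm_add_le ((a:ℂ) - w) (w + 1)
    have heq : (a:ℂ) - w + (w + 1) = ((a + 1 : ℝ) : ℂ) := by push_cast; ring
    rw [heq, Complex.norm_real, Real.norm_eq_abs] at htri
    have hcomm : ‖(a:ℂ) - w‖ = ‖w - (a:ℂ)‖ := by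
      exact norm_sub_rev (a:ℂ) w
    rw [hcomm] at htri
    have h0 : |a + 1| = a + 1 := abs_of_nonneg (by linarith [ha'.1])
    rw [h0] at htri
    linarith
  -- squared versions
  have h1sq : Complex.normSq (w - 1) < 2 := by
    have := mul_self_lt_mul_self (norm_nonneg _) h1
    rw [← Complex.sq_norm]
    nlinarith
  have h2sq : 2 < Complex.normSq (w + 1) := by
    have := mul_self_lt_mul_self (Real.sqrt_nonneg 2) hplus
    rw [← Complex.sq_norm]
    nlinarith
  set x := w.re with hx
  set y := w.im with hy
  have e1 : Complex.normSq (w - 1) = (x - 1)^2 + y^2 := by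
    simp [Complex.normSq_apply, Complex.sub_re, Complex.sub_im]; ring
  have e2 : Complex.normSq (w + 1) = (x + 1)^2 + y^2 := by
    simp [Complex.normSq_apply, Complex.add_re, Complex.add_im]; ring
  rw [e1] at h1sq
  rw [e2] at h2sq
  -- conclude
  have hgoal : ‖w^2 - 1‖ ^ 2 < (2 * ‖w‖) ^ 2 := by
    rw [mul_pow, Complex.sq_norm, Complex.sq_norm]
    have e3 : Complex.normSq (w^2 - 1) = (x^2 - y^2 - 1)^2 + (2*x*y)^2 := by
      simp [Complex.normSq_apply, Complex.sub_re, Complex.sub_im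
        , Complex.mul_re, Complex.mul_im, pow_two]
      ring
    have e4 : Complex.normSq w = x^2 + y^2 := by
      simp [Complex.normSq_apply]; ring
    rw [e3, e4]
    nlinarith [mul_pos (by linarith : (0:ℝ) < 2*x - (x^2 + y^2 - 1))
      (by linarith : (0:ℝ) < (x^2 + y^2 - 1) + 2*x), sq_nonneg y]
  exact lt_of_pow_lt_pow_left₀ 2 (by positivity) hgoal
end

section
/- Suppose p is analytic on the open unit disc with p(0) = 1 and Re p(z) > α there, where 0 ≤ α < 1. Then for every z with |z| ≤ r < 1, |z p'(z)/p(z)| ≤ 2(1-α)r / ((1-r)(1+(1-2α)r)). -/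
open Metric Set

open Metric Set

lemma mobius_abs_lt (u v : ℂ) (hu : ‖u‖ < 1) (hv : ‖v‖ < 1) :
    ‖u + v‖ < ‖1 + (starRingEnd ℂ) u * v‖ := by
  have h1 : Complex.normSq (1 + (starRingEnd ℂ) u * v) - Complex.normSq (u + v)
      = (1 - Complex.normSq u) * (1 - Complex.normSq v) := by
    simp [Complex.normSq_apply, Complex.add_re, Complex.add_im, Complex.mul_re, Complex.mul_im,
      Complex.conj_re, Complex.conj_im]
    ring
  have hu2 : Complex.normSq u < 1 := by
    rw [Complex.normSq_eq_norm_sq]; nlinarith [norm_nonneg u]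
  have hv2 : Complex.normSq v < 1 := by
    rw [Complex.normSq_eq_norm_sq]; nlinarith [norm_nonneg v]
  have h2 : Complex.normSq (u + v) < Complex.normSq (1 + (starRingEnd ℂ) u * v) := by
    nlinarith
  rw [Complex.norm_def, Complex.norm_def]
  exact Real.sqrt_lt_sqrt (Complex.normSq_nonneg _) h2

lemma schwarzPick {f : ℂ → ℂ} (hd : DifferentiableOn ℂ f (ball 0 1))
    (hm : MapsTo f (ball 0 1) (ball 0 1)) {a : ℂ} (ha : a ∈ ball (0:ℂ) 1) :
    ‖deriv f a‖ * (1 - ‖a‖ ^ 2) ≤ 1 - ‖f a‖ ^ 2 := by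
  set b := f a with hbdef
  have ha1 : ‖a‖ < 1 := by simpa [mem_ball_zero_iff] using ha
  have hb1 : ‖b‖ < 1 := by simpa [mem_ball_zero_iff] using hm ha
  set m : ℂ → ℂ := fun ζ => (a + ζ) / (1 + (starRingEnd ℂ) a * ζ) with hmdef
  set Bl : ℂ → ℂ := fun w => (w - b) / (1 - (starRingEnd ℂ) b * w) with hBldef
  -- denominators are nonzero
  have hdm : ∀ ζ : ℂ, ‖ζ‖ < 1 → 1 + (starRingEnd ℂ) a * ζ ≠ 0 := by
    intro ζ hζ h
    have : ‖(starRingEnd ℂ) a * ζ‖ < 1 := by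
      rw [norm_mul, Complex.norm_conj]; nlinarith [norm_nonneg a, norm_nonneg ζ]
    have h2 : (starRingEnd ℂ) a * ζ = -1 := by linear_combination h
    rw [h2] at this; simp at this
  have hdB : ∀ w : ℂ, ‖w‖ < 1 → 1 - (starRingEnd ℂ) b * w ≠ 0 := by
    intro w hw h
    have : ‖(starRingEnd ℂ) b * w‖ < 1 := by
      rw [norm_mul, Complex.norm_conj]; nlinarith [norm_nonneg b, norm_nonneg w]
    have h2 : (starRingEnd ℂ) b * w = 1 := by linear_combination -h
    rw [h2] at this; simp at this
  -- m maps ball to ball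
  have hmmaps : MapsTo m (ball 0 1) (ball 0 1) := by
    intro ζ hζ
    have hζ1 : ‖ζ‖ < 1 := by simpa [mem_ball_zero_iff] using hζ
    have := mobius_abs_lt a ζ ha1 hζ1
    rw [mem_ball_zero_iff, hmdef]
    simp only [norm_div]
    rw [div_lt_one (norm_pos_iff.mpr (hdm ζ hζ1))]
    exact this
  -- Bl maps ball to ball
  have hBlmaps : ∀ w : ℂ, ‖w‖ < 1 → ‖Bl w‖ < 1 := by
    intro w hw
    have key := mobius_abs_lt (-b) w (by simpa using hb1) hw
    have e1 : -b + w = w - b := by ring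
    have e2 : 1 + (starRingEnd ℂ) (-b) * w = 1 - (starRingEnd ℂ) b * w := by
      rw [map_neg]; ring
    rw [e1, e2] at key
    rw [hBldef]
    simp only [norm_div]
    rw [div_lt_one (norm_pos_iff.mpr (hdB w hw))]
    exact key
  set F : ℂ → ℂ := fun ζ => Bl (f (m ζ)) with hFdef
  have hFmaps : MapsTo F (ball 0 1) (ball 0 1) := by
    intro ζ hζ
    rw [mem_ball_zero_iff]
    exact hBlmaps _ (by simpa [mem_ball_zero_iff] using hm (hmmaps hζ))
  have hFdiff : DifferentiableOn ℂ F (ball 0 1) := by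
    have hmdiff : DifferentiableOn ℂ m (ball 0 1) := by
      apply DifferentiableOn.div
      · fun_prop
      · fun_prop
      · intro ζ hζ; exact hdm ζ (by simpa [mem_ball_zero_iff] using hζ)
    have hfm : DifferentiableOn ℂ (fun ζ => f (m ζ)) (ball 0 1) := hd.comp hmdiff hmmaps
    apply DifferentiableOn.div
    · exact hfm.sub_const b
    · apply DifferentiableOn.const_sub
      exact hfm.const_mul _
    · intro ζ hζ
      exact hdB _ (by simpa [mem_ball_zero_iff] using hm (hmmaps hζ))
  have hF0 : F 0 = 0 := by
    rw [hFdef]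
    simp only
    have : m 0 = a := by rw [hmdef]; simp
    rw [this, ← hbdef, hBldef]
    simp
  -- derivative computation
  have hm0 : HasDerivAt m (1 - a * (starRingEnd ℂ) a) 0 := by
    have h1 : HasDerivAt (fun ζ : ℂ => a + ζ) 1 0 := by
      simpa using (hasDerivAt_id (0:ℂ)).const_add a
    have h2 : HasDerivAt (fun ζ : ℂ => 1 + (starRingEnd ℂ) a * ζ) ((starRingEnd ℂ) a) 0 := by
      simpa using ((hasDerivAt_id (0:ℂ)).const_mul ((starRingEnd ℂ) a)).const_add 1
    have h3 := h1.div h2 (by simpa using hdm 0 (by simp))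
    convert h3 using 1
    · rfl
    · rfl
    · rfl
    · simp
  have hfa : HasDerivAt f (deriv f a) a :=
    (hd.differentiableAt (isOpen_ball.mem_nhds ha)).hasDerivAt
  have hsb : (0:ℝ) < 1 - ‖b‖ ^ 2 := by nlinarith [norm_nonneg b]
  have hsa : (0:ℝ) < 1 - ‖a‖ ^ 2 := by nlinarith [norm_nonneg a]
  have e_b : 1 - (starRingEnd ℂ) b * b = ((1 - ‖b‖ ^ 2 : ℝ) : ℂ) := by
    rw [mul_comm, Complex.mul_conj, Complex.normSq_eq_norm_sq]; push_cast; ring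
  have e_a : 1 - a * (starRingEnd ℂ) a = ((1 - ‖a‖ ^ 2 : ℝ) : ℂ) := by
    rw [Complex.mul_conj, Complex.normSq_eq_norm_sq]; push_cast; ring
  have hBlb : HasDerivAt Bl
      ((1 * (1 - (starRingEnd ℂ) b * b) - (b - b) * (-(starRingEnd ℂ) b)) /
        (1 - (starRingEnd ℂ) b * b) ^ 2) b := by
    have h1 : HasDerivAt (fun w : ℂ => w - b) 1 b := (hasDerivAt_id b).sub_const b
    have h2 : HasDerivAt (fun w : ℂ => 1 - (starRingEnd ℂ) b * w) (-(starRingEnd ℂ) b) b := by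
      simpa using ((hasDerivAt_id b).const_mul ((starRingEnd ℂ) b)).const_sub 1
    exact h1.div h2 (hdB b hb1)
  have hm0a : m 0 = a := by rw [hmdef]; simp
  have hfm : HasDerivAt (fun ζ => f (m ζ)) (deriv f a * (1 - a * (starRingEnd ℂ) a)) 0 := by
    exact HasDerivAt.comp 0 (by rw [hm0a]; exact hfa) hm0
  have hFd : HasDerivAt F
      (((1 * (1 - (starRingEnd ℂ) b * b) - (b - b) * (-(starRingEnd ℂ) b)) /
        (1 - (starRingEnd ℂ) b * b) ^ 2) * (deriv f a * (1 - a * (starRingEnd ℂ) a))) 0 := by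
    exact HasDerivAt.comp 0 (by rw [show f (m 0) = b by rw [hm0a, hbdef]]; exact hBlb) hfm
  have habs := Complex.norm_deriv_le_one_of_mapsTo_ball hFdiff (by rw [hF0]; exact hFmaps.mono_right ball_subset_closedBall) one_pos
  rw [hFd.deriv] at habs
  have hV : ((1 * (1 - (starRingEnd ℂ) b * b) - (b - b) * (-(starRingEnd ℂ) b)) /
        (1 - (starRingEnd ℂ) b * b) ^ 2) * (deriv f a * (1 - a * (starRingEnd ℂ) a))
      = deriv f a * ((1 - ‖a‖ ^ 2 : ℝ) : ℂ) / ((1 - ‖b‖ ^ 2 : ℝ) : ℂ) := by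
    have hc : ((1 - ‖b‖ ^ 2 : ℝ) : ℂ) ≠ 0 := Complex.ofReal_ne_zero.2 hsb.ne'
    rw [e_a, e_b]
    generalize ((1 - ‖b‖ ^ 2 : ℝ) : ℂ) = c at hc ⊢
    field_simp
    ring
  rw [hV] at habs
  rw [norm_div, norm_mul, Complex.norm_real, Real.norm_eq_abs, Complex.norm_real, Real.norm_eq_abs,
    abs_of_pos hsa, abs_of_pos hsb, div_le_one hsb] at habs
  exact habs

set_option maxHeartbeats 1000000 in

lemma key_real (β ρ r s x D A Bv : ℝ) (hβl : -1 ≤ β) (hβu : β ≤ 1)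
    (hs0 : 0 ≤ s) (hsρ : s ≤ ρ) (hρr : ρ ≤ r) (hr1 : r < 1) (hρ0 : 0 ≤ ρ)
    (hx1 : x ≤ s) (hx2 : -s ≤ x) (hD0 : 0 ≤ D)
    (hD : D * (1 - ρ^2) ≤ 1 - s^2)
    (hA : A^2 = 1 - 2*x + s^2) (hB : Bv^2 = 1 + 2*β*x + β^2*s^2)
    (hA0 : 0 ≤ A) (hB0 : 0 ≤ Bv) :
    ρ * D * (1+β) / (A * Bv) ≤ (1+β) * r / ((1-r)*(1+β*r)) := by
  have hρ1 : ρ < 1 := lt_of_le_of_lt hρr hr1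
  have hs1 : s < 1 := lt_of_le_of_lt hsρ hρ1
  have hr0 : 0 ≤ r := le_trans hρ0 hρr
  have hβs : 0 < 1 + β*s := by nlinarith
  have hβρ : 0 < 1 + β*ρ := by nlinarith
  have hβr : 0 < 1 + β*r := by nlinarith
  have hβ0 : 0 ≤ 1 + β := by linarith
  -- the factored quantity is nonnegative
  have hfac : 0 ≤ 2*β*(x+s) + (1-β)*(1-β*s^2) := by
    rcases le_or_gt 0 β with hb | hb
    · have h1 : 0 ≤ 2*β*(x+s) := mul_nonneg (by linarith) (by linarith)
      have h2 : 0 ≤ (1-β)*(1-β*s^2) := mul_nonneg (by linarith) (by nlinarith)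
      linarith
    · nlinarith [mul_nonneg (neg_nonneg.2 hb.le) (sq_nonneg ((1-β)*s - 2)),
        mul_nonneg (by linarith : (0:ℝ) ≤ s - x) (by linarith : (0:ℝ) ≤ -β)]
  have hG : (A*Bv)^2 - ((1-s)*(1+β*s))^2 = 2*(s-x)*(2*β*(x+s) + (1-β)*(1-β*s^2)) := by
    rw [mul_pow, mul_pow, hA, hB]; ring
  have hsq : ((1-s)*(1+β*s))^2 ≤ (A*Bv)^2 := by
    have := mul_nonneg (mul_nonneg (by norm_num : (0:ℝ) ≤ 2) (by linarith : (0:ℝ) ≤ s - x)) hfac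
    linarith [hG, this]
  have hABpos : (0:ℝ) < (1-s)*(1+β*s) := mul_pos (by linarith) hβs
  have hABlow : (1-s)*(1+β*s) ≤ A*Bv := by
    have h := Real.sqrt_le_sqrt hsq
    rwa [Real.sqrt_sq hABpos.le, Real.sqrt_sq (mul_nonneg hA0 hB0)] at h
  have step1 : ρ * D * (1+β) / (A * Bv) ≤ ρ * D * (1+β) / ((1-s)*(1+β*s)) :=
    div_le_div_of_nonneg_left (mul_nonneg (mul_nonneg hρ0 hD0) hβ0) hABpos hABlow
  have step2 : ρ * D * (1+β) / ((1-s)*(1+β*s)) ≤ (1+β) * r / ((1-r)*(1+β*r)) := by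
    rw [div_le_div_iff₀ hABpos (by nlinarith)]
    have hcore : ρ * D * ((1-r)*(1+β*r)) ≤ r * ((1-s)*(1+β*s)) := by
      have h1 : ρ * D * ((1-r)*(1+β*r)) * (1 - ρ^2) ≤ ρ * (1-s^2) * ((1-r)*(1+β*r)) := by
        have hnn : 0 ≤ ρ * ((1-r)*(1+β*r)) :=
          mul_nonneg hρ0 (mul_nonneg (by linarith) hβr.le)
        nlinarith [mul_le_mul_of_nonneg_left hD hnn]
      have hQ1 : (1+s)*(1+β*ρ) ≤ (1+ρ)*(1+β*s) := by nlinarith [mul_nonneg (by linarith : (0:ℝ) ≤ 1-β) (by linarith : (0:ℝ) ≤ ρ - s)]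
      have hQ2 : ρ*(1-r)*(1+β*r) ≤ r*(1-ρ)*(1+β*ρ) := by
        nlinarith [mul_nonneg (by linarith : (0:ℝ) ≤ r - ρ) (by nlinarith : (0:ℝ) ≤ 1 + β*r*ρ)]
      have hQ : ρ*(1+s)*(1-r)*(1+β*r) ≤ r*(1+β*s)*(1-ρ)*(1+ρ) := by
        nlinarith [mul_le_mul_of_nonneg_left hQ1 (mul_nonneg (mul_nonneg hρ0 (by linarith)) hβr.le : (0:ℝ) ≤ ρ*(1-r)*(1+β*r)),
          mul_le_mul_of_nonneg_left hQ2 (mul_nonneg (by linarith) hβs.le : (0:ℝ) ≤ (1+ρ)*(1+β*s)), hβρ]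
      have h2 : ρ * (1-s^2) * ((1-r)*(1+β*r)) ≤ r * ((1-s)*(1+β*s)) * (1 - ρ^2) := by
        nlinarith [mul_le_mul_of_nonneg_left hQ (by linarith : (0:ℝ) ≤ 1-s)]
      have h3 : ρ * D * ((1-r)*(1+β*r)) * (1 - ρ^2) ≤ r * ((1-s)*(1+β*s)) * (1 - ρ^2) :=
        le_trans h1 h2
      have hpos : (0:ℝ) < 1 - ρ^2 := by nlinarith
      exact le_of_mul_le_mul_right h3 hpos
    nlinarith [mul_le_mul_of_nonneg_left hcore hβ0]
  exact le_trans step1 step2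

theorem stmt_14 (α : ℝ) (hα0 : 0 ≤ α) (hα1 : α < 1) (p : ℂ → ℂ)
    (hp : DifferentiableOn ℂ p (Metric.ball 0 1))
    (hp0 : p 0 = 1)
    (hpre : ∀ z ∈ Metric.ball (0:ℂ) 1, α < (p z).re)
    (r : ℝ) (hr0 : 0 ≤ r) (hr1 : r < 1) :
    ∀ z : ℂ, ‖z‖ ≤ r →
      ‖z * deriv p z / p z‖ ≤
        2 * (1 - α) * r / ((1 - r) * (1 + (1 - 2*α) * r)) := by
  intro z hz
  set β : ℝ := 1 - 2*α with hβdef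
  have hβl : -1 < β := by rw [hβdef]; linarith
  have hβu : β ≤ 1 := by rw [hβdef]; linarith
  have hz1 : ‖z‖ < 1 := lt_of_le_of_lt hz hr1
  have hzball : z ∈ ball (0:ℂ) 1 := by
    rw [mem_ball_zero_iff]; exact hz1
  -- denominator of Möbius transform of p is nonzero
  have hreβ : ∀ ζ ∈ ball (0:ℂ) 1, 0 < (p ζ + (β:ℂ)).re := by
    intro ζ hζ
    have := hpre ζ hζ
    simp only [Complex.add_re, Complex.ofReal_re]
    rw [hβdef]; linarith
  have hden : ∀ ζ ∈ ball (0:ℂ) 1, p ζ + (β:ℂ) ≠ 0 := by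
    intro ζ hζ h
    have := hreβ ζ hζ
    rw [h] at this; simp at this
  set φ : ℂ → ℂ := fun ζ => (p ζ - 1) / (p ζ + (β:ℂ)) with hφdef
  have hφdiff : DifferentiableOn ℂ φ (ball 0 1) :=
    DifferentiableOn.div (hp.sub_const 1) (hp.add_const _) hden
  have hφ0 : φ 0 = 0 := by rw [hφdef]; simp [hp0]
  have hφmaps : MapsTo φ (ball 0 1) (ball 0 1) := by
    intro ζ hζ
    have hlt : Complex.normSq (p ζ - 1) < Complex.normSq (p ζ + (β:ℂ)) := by
      have hdiff : Complex.normSq (p ζ + (β:ℂ)) - Complex.normSq (p ζ - 1)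
          = 4*(1-α)*((p ζ).re - α) := by
        simp only [Complex.normSq_apply, Complex.add_re, Complex.add_im, Complex.sub_re,
          Complex.sub_im, Complex.ofReal_re, Complex.ofReal_im, Complex.one_re, Complex.one_im]
        rw [hβdef]; ring
      have := hpre ζ hζ
      nlinarith
    have habs : ‖p ζ - 1‖ < ‖p ζ + (β:ℂ)‖ := by
      rw [Complex.norm_def, Complex.norm_def]
      exact Real.sqrt_lt_sqrt (Complex.normSq_nonneg _) hlt
    rw [mem_ball_zero_iff, hφdef]
    simp only [norm_div]
    rw [div_lt_one (norm_pos_iff.mpr (hden ζ hζ))]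
    exact habs
  -- Schwarz and Schwarz–Pick
  have hu_le : ‖φ z‖ ≤ ‖z‖ :=
    Complex.norm_le_norm_of_mapsTo_ball hφdiff (hφmaps.mono_right ball_subset_closedBall) hφ0 hz1
  have hSP := schwarzPick hφdiff hφmaps hzball
  -- derivative of φ
  have hpz : HasDerivAt p (deriv p z) z :=
    (hp.differentiableAt (isOpen_ball.mem_nhds hzball)).hasDerivAt
  have hφz : HasDerivAt φ
      ((deriv p z * (p z + (β:ℂ)) - (p z - 1) * deriv p z) / (p z + (β:ℂ))^2) z :=
    (hpz.sub_const 1).div (hpz.add_const _) (hden z hzball)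
  have hpne : p z ≠ 0 := by
    intro h
    have := hpre z hzball
    rw [h] at this; simp at this; linarith
  have hdz : p z + (β:ℂ) ≠ 0 := hden z hzball
  have h1β : (1:ℂ) + (β:ℂ) ≠ 0 := by
    intro h
    have : ((1+β:ℝ):ℂ) = 0 := by push_cast; linear_combination h
    rw [Complex.ofReal_eq_zero] at this
    linarith
  set u : ℂ := φ z with hudef
  have hu1 : ‖u‖ < 1 := by
    have := hφmaps hzball
    rwa [mem_ball_zero_iff] at this
  have e1 : 1 - u = (1+(β:ℂ)) / (p z + (β:ℂ)) := by
    rw [hudef, hφdef]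
    field_simp
    ring
  have e2 : 1 + (β:ℂ) * u = p z * (1+(β:ℂ)) / (p z + (β:ℂ)) := by
    rw [hudef, hφdef]
    field_simp
    ring
  have hiden : z * deriv p z / p z
      = z * deriv φ z * (1+(β:ℂ)) / ((1 - u) * (1 + (β:ℂ) * u)) := by
    rw [hφz.deriv, e1, e2]
    field_simp
    ring
  -- pass to absolute values
  have hcast : (1:ℂ) + (β:ℂ) = ((1+β:ℝ):ℂ) := by push_cast; ring
  have habs_eq : ‖z * deriv p z / p z‖
      = ‖z‖ * ‖deriv φ z‖ * (1+β)
        / (‖1 - u‖ * ‖1 + (β:ℂ) * u‖) := by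
    rw [hiden, norm_div, norm_mul, norm_mul, norm_mul, hcast, Complex.norm_real, Real.norm_eq_abs,
      abs_of_pos (by linarith : (0:ℝ) < 1+β)]
  rw [habs_eq]
  have hA : (‖1 - u‖)^2 = 1 - 2*u.re + (‖u‖)^2 := by
    simp only [Complex.sq_norm]
    simp only [Complex.normSq_apply, Complex.sub_re, Complex.sub_im, Complex.one_re,
      Complex.one_im]
    ring
  have hB : (‖1 + (β:ℂ)*u‖)^2 = 1 + 2*β*u.re + β^2*(‖u‖)^2 := by
    simp only [Complex.sq_norm]
    simp only [Complex.normSq_apply, Complex.add_re, Complex.add_im, Complex.mul_re,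
      Complex.mul_im, Complex.one_re, Complex.one_im, Complex.ofReal_re, Complex.ofReal_im]
    ring
  have hxre := Complex.abs_re_le_norm u
  have hfinal := key_real β (‖z‖) r (‖u‖) u.re
      (‖deriv φ z‖) (‖1-u‖) (‖1+(β:ℂ)*u‖)
      hβl.le hβu (norm_nonneg u) hu_le hz hr1 (norm_nonneg z)
      (le_trans (le_abs_self _) hxre) (by linarith [neg_abs_le u.re])
      (norm_nonneg _) hSP hA hB (norm_nonneg _) (norm_nonneg _)
  have hgoal_rhs : 2 * (1 - α) * r / ((1 - r) * (1 + (1 - 2*α) * r))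
      = (1+β) * r / ((1-r)*(1+β*r)) := by rw [hβdef]; ring
  rw [hgoal_rhs]
  exact hfinal
end
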